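/- arXiv:1104.4517 — 3 statements merged into one kernel-verified Lean document; each statement's English description precedes it below -/
import Mathlib

section
/- Let K be a field of characteristic zero, let d ≥ 1, and let a : ℕ → K satisfy a(0) ≠ 0 together with the relations C(d,k)·C(d,l)·a(i)·a(j) = C(d,i)·C(d,j)·a(k)·a(l) for all i, j, k, l ≤ d−1 with i + j = k + l. Then for every m ≤ d−1, a(m) = C(d,m) · a(0) · (a(1)/(d·a(0)))^m. -/
/-- If `a 0 ≠ 0` and the coefficients satisfy the t-eliminated orbit relations, then
every coefficient is determined: `a m = C(d,m)·a₀·(a₁/(d·a₀))^m` for `m ≤ d-1`. -/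
theorem coeffs_determined_of_leading_coeff_ne_zero
    (K : Type*) [Field K] [CharZero K] (d : ℕ) (hd : 1 ≤ d)
    (a : ℕ → K) (h0 : a 0 ≠ 0)
    (hrel : ∀ i j k l : ℕ, i ≤ d - 1 → j ≤ d - 1 → k ≤ d - 1 → l ≤ d - 1 →
      i + j = k + l →
      (d.choose k : K) * (d.choose l : K) * a i * a j
        = (d.choose i : K) * (d.choose j : K) * a k * a l) :
    ∀ m ≤ d - 1, a m = (d.choose m : K) * a 0 * (a 1 / (d * a 0)) ^ m := by
  intro m
  induction m with
  | zero => intro _; simp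
  | succ n ih =>
    intro hm
    have hn : n ≤ d - 1 := le_trans (Nat.le_succ n) hm
    have h1 : (1 : ℕ) ≤ d - 1 := le_trans (Nat.succ_le_succ (Nat.zero_le n)) hm
    have key := hrel (n + 1) 0 n 1 hm (Nat.zero_le _) hn h1 (by ring)
    have hdK : (d : K) ≠ 0 := Nat.cast_ne_zero.mpr (by omega)
    have hcn : (d.choose n : K) ≠ 0 :=
      Nat.cast_ne_zero.mpr (Nat.choose_pos (by omega)).ne'
    rw [Nat.choose_one_right, Nat.choose_zero_right] at key
    have step : a (n + 1) = (d.choose (n + 1) : K) * a n * a 1 /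
        ((d.choose n : K) * d * a 0) := by
      field_simp
      linear_combination key
    rw [step, ih hn]
    rw [div_pow, div_pow]
    field_simp
    ring
end

section
/- Let K be a field of characteristic zero, let d ≥ 1, and let a : ℕ → K satisfy a(0) ≠ 0 together with the relations C(d,k)·C(d,l)·a(i)·a(j) = C(d,i)·C(d,j)·a(k)·a(l) for all i, j, k, l ≤ d−1 with i + j = k + l. Then there exist t, c ∈ K (namely t = −a(1)/(d·a(0)) and c = a(d) − (−t)^d·a(0)) such that, in the polynomial ring K[x,y], Σ_{i=0}^{d} a(i)·x^{d−i}·y^{i} = a(0)·(x − t·y)^d + c·y^d. -/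
open MvPolynomial

/-- A binary form `Σ a(i)·x^(d-i)·y^i` with `a 0 ≠ 0` whose coefficients satisfy the
t-eliminated orbit relations lies in the unipotent orbit of the family `a₀x^d + c·y^d`:
with `t = -a₁/(d·a₀)` and `c = a_d - (-t)^d·a₀` it equals `a₀(x - ty)^d + c·y^d`. -/
theorem form_in_unipotent_orbit_of_leading_coeff_ne_zero
    (K : Type*) [Field K] [CharZero K] (d : ℕ) (hd : 1 ≤ d)
    (a : ℕ → K) (h0 : a 0 ≠ 0)
    (hrel : ∀ i j k l : ℕ, i ≤ d - 1 → j ≤ d - 1 → k ≤ d - 1 → l ≤ d - 1 →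
      i + j = k + l →
      (d.choose k : K) * (d.choose l : K) * a i * a j
        = (d.choose i : K) * (d.choose j : K) * a k * a l) :
    ∃ t c : K, t = -(a 1) / ((d : K) * a 0) ∧ c = a d - (-t) ^ d * a 0 ∧
      (∑ i ∈ Finset.range (d + 1),
          C (a i) * X 0 ^ (d - i) * X 1 ^ i : MvPolynomial (Fin 2) K)
        = C (a 0) * (X 0 - C t * X 1) ^ d + C c * X 1 ^ d := by
  set t : K := -(a 1) / ((d : K) * a 0) with ht
  set c : K := a d - (-t) ^ d * a 0 with hc
  refine ⟨t, c, rfl, rfl, ?_⟩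
  clear_value t c
  have hdK : (d : K) ≠ 0 := Nat.cast_ne_zero.mpr (by omega)
  have hnt : -t = a 1 / ((d : K) * a 0) := by rw [ht]; ring
  -- key coefficient formula
  have key : ∀ i, i ≤ d - 1 → a i = a 0 * (-t) ^ i * (d.choose i : K) := by
    intro i hi
    induction i with
    | zero => simp
    | succ n ih =>
      have hn : n ≤ d - 1 := by omega
      have h1 : 1 ≤ d - 1 := by omega
      have hrel' := hrel n 1 (n + 1) 0 hn h1 hi (by omega) (by omega)
      have hchoose : (d.choose n : K) ≠ 0 :=
        Nat.cast_ne_zero.mpr (Nat.choose_pos (by omega)).ne'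
      have han : a n = a 0 * (-t) ^ n * (d.choose n : K) := ih hn
      rw [han] at hrel'
      simp only [Nat.choose_zero_right, Nat.choose_one_right, Nat.cast_one] at hrel'
      -- hrel' : (d.choose (n+1)) * 1 * (a 0 * (-t)^n * choose n) * a 1
      --        = choose n * d * a (n+1) * a 0
      have ha1 : a 1 = (-t) * ((d : K) * a 0) := by
        rw [hnt, div_mul_cancel₀ _ (mul_ne_zero hdK h0)]
      have : a (n + 1) * ((d.choose n : K) * (d : K) * a 0)
          = a 0 * (-t) ^ (n + 1) * (d.choose (n + 1) : K)
            * ((d.choose n : K) * (d : K) * a 0) := by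
        rw [ha1] at hrel'
        rw [pow_succ]
        linear_combination -hrel'
      have hne : (d.choose n : K) * (d : K) * a 0 ≠ 0 := by
        simp [hchoose, hdK, h0]
      exact mul_right_cancel₀ hne this
  -- expand the power
  have hexp : (X 0 - C t * X 1 : MvPolynomial (Fin 2) K) ^ d
      = ∑ m ∈ Finset.range (d + 1),
          (-(C t * X 1)) ^ m * X 0 ^ (d - m) * (d.choose m : MvPolynomial (Fin 2) K) := by
    rw [show (X 0 - C t * X 1 : MvPolynomial (Fin 2) K)
        = -(C t * X 1) + X 0 by ring, add_pow]
  rw [hexp, Finset.mul_sum, Finset.sum_range_succ, Finset.sum_range_succ]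
  have hneg : ∀ m : ℕ, (-(C t * X 1) : MvPolynomial (Fin 2) K) ^ m
      = C ((-t) ^ m) * X 1 ^ m := by
    intro m
    rw [show (-(C t * X 1) : MvPolynomial (Fin 2) K) = C (-t) * X 1 by
      rw [C_neg]; ring, mul_pow, C_pow]
  have hlast : C (a d) * X 0 ^ (d - d) * X 1 ^ d
      = C (a 0) * ((-(C t * X 1)) ^ d * X 0 ^ (d - d)
          * (d.choose d : MvPolynomial (Fin 2) K)) + C c * X 1 ^ d := by
    rw [hneg, hc, Nat.sub_self, Nat.choose_self, Nat.cast_one, map_sub, map_mul]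
    ring
  rw [hlast]
  have hmain : ∀ m ∈ Finset.range d,
      C (a m) * X 0 ^ (d - m) * X 1 ^ m
        = C (a 0) * ((-(C t * X 1)) ^ m * X 0 ^ (d - m)
            * (d.choose m : MvPolynomial (Fin 2) K)) := by
    intro m hm
    rw [Finset.mem_range] at hm
    rw [key m (by omega), hneg,
      show ((d.choose m : ℕ) : MvPolynomial (Fin 2) K)
        = C ((d.choose m : ℕ) : K) by simp, map_mul, map_mul]
    ring
  rw [Finset.sum_congr rfl hmain]
  ring
end

section
/- Let K be a field of characteristic zero, let n ≥ 1 and d ≥ 2, and let a be a K-valued function on exponent vectors i : Fin (n+1) → ℕ. For an exponent vector i with Σ_m i(m) = d, write M(i) for the multinomial coefficient d!/(i(0)!·…·i(n)!). Suppose that for all exponent vectors i, j, k, l, each with coordinate sum d, satisfying i + j = k + l (pointwise) and i(0) ≥ 1, j(0) ≥ 1, k(0) ≥ 1, l(0) ≥ 1, one has M(k)·M(l)·a(i)·a(j) = M(i)·M(j)·a(k)·a(l). If a(d·e₀) = 0, where d·e₀ is the exponent vector with first coordinate d and all other coordinates 0, then a(i) = 0 for every exponent vector i with coordinate sum d and i(0)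 ≥ 2. -/
/-- Multivariate analogue: if the coefficients `a i` of the first coordinate `q₀` of a
self-map of ℙⁿ satisfy the t-eliminated multinomial relations (for exponent vectors of
coordinate sum `d` with positive first coordinate), and the `x₀^d`-coefficient vanishes,
then every coefficient of a monomial with `x₀`-degree at least `2` vanishes. -/
theorem coeffs_vanish_of_leading_coeff_zero_multivariate
    (K : Type*) [Field K] [CharZero K] (n d : ℕ) (hn : 1 ≤ n) (hd : 2 ≤ d)
    (a : (Fin (n + 1) → ℕ) → K)
    (hrel : ∀ i j k l : Fin (n + 1) → ℕ,
      (∑ m, i m) = d → (∑ m, j m) = d → (∑ m, k m) = d → (∑ m, l m) = d →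
      i + j = k + l →
      1 ≤ i 0 → 1 ≤ j 0 → 1 ≤ k 0 → 1 ≤ l 0 →
      (Nat.multinomial Finset.univ k : K) * (Nat.multinomial Finset.univ l : K)
          * a i * a j
        = (Nat.multinomial Finset.univ i : K) * (Nat.multinomial Finset.univ j : K)
          * a k * a l)
    (h0 : a (Pi.single 0 d) = 0) :
    ∀ i : Fin (n + 1) → ℕ, (∑ m, i m) = d → 2 ≤ i 0 → a i = 0 := by
  have hM : ∀ f : Fin (n + 1) → ℕ, (Nat.multinomial Finset.univ f : K) ≠ 0 := fun f =>
    Nat.cast_ne_zero.mpr (Nat.multinomial_pos _ _).ne'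
  -- if the first coordinate already carries all of the degree, `i = Pi.single 0 d`
  have hbase : ∀ i : Fin (n + 1) → ℕ, (∑ m, i m) = d → i 0 = d → a i = 0 := by
    intro i hsum h1
    have hrest : ∑ m ∈ Finset.univ.erase 0, i m = 0 := by
      have := Finset.add_sum_erase Finset.univ i (Finset.mem_univ (0 : Fin (n + 1)))
      omega
    have hi : i = Pi.single 0 d := by
      funext m
      rcases eq_or_ne m 0 with rfl | hm
      · simp [h1]
      · have : i m = 0 :=
          Finset.sum_eq_zero_iff.mp hrest m (Finset.mem_erase.mpr ⟨hm, Finset.mem_univ m⟩)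
        simp [this, Pi.single_eq_of_ne hm]
    rw [hi]; exact h0
  have key : ∀ t : ℕ, ∀ i : Fin (n + 1) → ℕ,
      (∑ m, i m) = d → 2 ≤ i 0 → d - i 0 ≤ t → a i = 0 := by
    intro t
    induction t with
    | zero =>
      intro i hsum h2 ht
      have hle : i 0 ≤ d := by
        rw [← hsum]
        exact Finset.single_le_sum (fun m _ => Nat.zero_le _) (Finset.mem_univ 0)
      exact hbase i hsum (by omega)
    | succ t ih =>
      intro i hsum h2 ht
      have hle : i 0 ≤ d := by
        rw [← hsum]
        exact Finset.single_le_sum (fun m _ => Nat.zero_le _) (Finset.mem_univ 0)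
      by_cases h1 : i 0 = d
      · exact hbase i hsum h1
      · -- find a coordinate m ≠ 0 with i m ≥ 1
        have hrest : ∑ m ∈ Finset.univ.erase 0, i m = d - i 0 := by
          have := Finset.add_sum_erase Finset.univ i (Finset.mem_univ (0 : Fin (n + 1)))
          omega
        have hex : ∃ m ∈ Finset.univ.erase (0 : Fin (n + 1)), i m ≠ 0 := by
          by_contra hco
          push_neg at hco
          have : ∑ m ∈ Finset.univ.erase 0, i m = 0 :=
            Finset.sum_eq_zero fun m hm => hco m hm
          omega
        obtain ⟨m, hm, him⟩ := hex
        have hm0 : m ≠ 0 := (Finset.mem_erase.mp hm).1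
        have him1 : 1 ≤ i m := Nat.one_le_iff_ne_zero.mpr him
        set k : Fin (n + 1) → ℕ :=
          Function.update (Function.update i m (i m - 1)) 0 (i 0 + 1) with hk
        set l : Fin (n + 1) → ℕ :=
          Function.update (Function.update i m (i m + 1)) 0 (i 0 - 1) with hl
        have hk0 : k 0 = i 0 + 1 := by simp [hk]
        have hl0 : l 0 = i 0 - 1 := by simp [hl]
        -- sums of k and l
        have hsumg : ∀ v : ℕ, ∑ x, Function.update i m v x = v + ∑ x ∈ Finset.univ.erase m, i x := by
          intro v
          rw [Finset.sum_update_of_mem (Finset.mem_univ m), Finset.sdiff_singleton_eq_erase]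
        have hsplit : i m + ∑ x ∈ Finset.univ.erase m, i x = d := by
          rw [Finset.add_sum_erase Finset.univ i (Finset.mem_univ m)]; exact hsum
        have hsumk : ∑ x, k x = d := by
          rw [hk, Finset.sum_update_of_mem (Finset.mem_univ (0 : Fin (n + 1))),
            Finset.sdiff_singleton_eq_erase]
          have h01 : (Function.update i m (i m - 1)) 0 = i 0 :=
            Function.update_of_ne (Ne.symm hm0) _ _
          have h2s := hsumg (i m - 1)
          have hg := Finset.add_sum_erase Finset.univ (Function.update i m (i m - 1))
            (Finset.mem_univ (0 : Fin (n + 1)))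
          omega
        have hsuml : ∑ x, l x = d := by
          rw [hl, Finset.sum_update_of_mem (Finset.mem_univ (0 : Fin (n + 1))),
            Finset.sdiff_singleton_eq_erase]
          have h01 : (Function.update i m (i m + 1)) 0 = i 0 :=
            Function.update_of_ne (Ne.symm hm0) _ _
          have h2s := hsumg (i m + 1)
          have hg := Finset.add_sum_erase Finset.univ (Function.update i m (i m + 1))
            (Finset.mem_univ (0 : Fin (n + 1)))
          omega
        have heq : i + i = k + l := by
          funext x
          rcases eq_or_ne x 0 with rfl | hx0
          · simp only [Pi.add_apply, hk0, hl0]; omega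
          · rcases eq_or_ne x m with rfl | hxm
            · simp only [Pi.add_apply, hk, hl, Function.update_of_ne hx0,
                Function.update_self]
              omega
            · simp [hk, hl, Function.update_of_ne hx0, Function.update_of_ne hxm]
        have hak : a k = 0 := by
          apply ih k hsumk (by omega)
          rw [hk0]; omega
        have e := hrel i i k l hsum hsum hsumk hsuml heq (by omega) (by omega)
          (by omega) (by omega)
        rw [hak] at e
        simp only [mul_zero, zero_mul] at e
        rcases mul_eq_zero.mp e with h | h
        · rcases mul_eq_zero.mp h with h' | h'
          · exact absurd h' (mul_ne_zero (hM k) (hM l))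
          · exact h'
        · exact h
  intro i hsum h2
  exact key (d - i 0) i hsum h2 le_rfl
end
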